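/- arXiv:1712.00809 — 2 statements merged into one kernel-verified Lean document; each statement's English description precedes it below -/
import Mathlib

section
/- Let G be a disconnected d-distinguishing critical graph (d ≥ 3) with c(G) connected components all isomorphic to H. Then c(G) > D(H, D(H)), the number of inequivalent distinguishing labelings of H using D(H) labels. -/
/-- A labeling with `r` labels is distinguishing if the only automorphism
preserving all labels is the identity. -/
def IsDistinguishing {V : Type*} (G : SimpleGraph V) (r : ℕ) (f : V → Fin r) : Prop :=
  ∀ φ : G ≃g G, (∀ v, f (φ v) = f v) → ∀ v, φ v = v

/-- The distinguishing number of a graph. -/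
noncomputable def distNum {V : Type*} (G : SimpleGraph V) : ℕ :=
  sInf {r : ℕ | ∃ f : V → Fin r, IsDistinguishing G r f}

/-- A graph is `d`-distinguishing critical if its distinguishing number is `d`
and no proper induced subgraph has distinguishing number `d`. -/
def DistCritical {V : Type*} (G : SimpleGraph V) (d : ℕ) : Prop :=
  distNum G = d ∧ ∀ s : Set V, s ≠ Set.univ → distNum (G.induce s) ≠ d

/-- The disjoint union of `c` copies of a graph `H`. -/
def copies {W : Type*} (c : ℕ) (H : SimpleGraph W) : SimpleGraph (Fin c × W) where
  Adj a b := a.1 = b.1 ∧ H.Adj a.2 b.2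
  symm := ⟨fun a b h => ⟨h.1.symm, h.2.symm⟩⟩
  loopless := ⟨fun a h => H.irrefl h.2⟩

/-- `numDistLab G k` is the number of inequivalent `k`-distinguishing labelings of `G`,
two labelings being equivalent when some automorphism of `G` maps one to the other. -/
noncomputable def numDistLab {V : Type*} (G : SimpleGraph V) (k : ℕ) : ℕ :=
  Nat.card (Quot (fun f g : {f : V → Fin k // IsDistinguishing G k f} =>
    ∃ φ : G ≃g G, ∀ v, f.1 (φ v) = g.1 v))

lemma isDist_comp {V V' : Type*} {G : SimpleGraph V} {G' : SimpleGraph V'} (e : G ≃g G')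
    {r : ℕ} {f : V' → Fin r} (hf : IsDistinguishing G' r f) :
    IsDistinguishing G r (f ∘ e) := by
  intro φ hφ v
  have key : ∀ u, (e.symm.trans (φ.trans e)) u = u := by
    apply hf
    intro u
    simpa using hφ (e.symm u)
  have := key (e v)
  simp at this
  exact this

lemma distNum_congr {V V' : Type*} {G : SimpleGraph V} {G' : SimpleGraph V'} (e : G ≃g G') :
    distNum G = distNum G' := by
  unfold distNum
  congr 1
  ext r
  constructor
  · rintro ⟨f, hf⟩
    exact ⟨f ∘ e.symm, isDist_comp e.symm hf⟩
  · rintro ⟨f, hf⟩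
    exact ⟨f ∘ e, isDist_comp e hf⟩

lemma isDist_of_injective {V : Type*} {G : SimpleGraph V} {r : ℕ} {f : V → Fin r}
    (hf : Function.Injective f) : IsDistinguishing G r f :=
  fun φ hφ v => hf (hφ v)

lemma distNum_mem {V : Type*} [Fintype V] (G : SimpleGraph V) :
    ∃ f : V → Fin (distNum G), IsDistinguishing G (distNum G) f := by
  have : distNum G ∈ {r : ℕ | ∃ f : V → Fin r, IsDistinguishing G r f} := by
    apply Nat.sInf_mem
    exact ⟨Fintype.card V, (Fintype.equivFin V), isDist_of_injective (Fintype.equivFin V).injective⟩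
  exact this

lemma distNum_le {V : Type*} {G : SimpleGraph V} {r : ℕ} {f : V → Fin r}
    (hf : IsDistinguishing G r f) : distNum G ≤ r :=
  Nat.sInf_le ⟨f, hf⟩

lemma copies_reachable_fst {W : Type*} {c : ℕ} {H : SimpleGraph W} {a b : Fin c × W}
    (h : (copies c H).Reachable a b) : a.1 = b.1 := by
  obtain ⟨p⟩ := h
  induction p with
  | nil => rfl
  | cons h _ ih => exact h.1.trans ih

def copiesIncl {W : Type*} (c : ℕ) (H : SimpleGraph W) (i : Fin c) : H →g copies c H where
  toFun w := (i, w)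
  map_rel' h := ⟨rfl, h⟩

lemma copies_reachable {W : Type*} {c : ℕ} {H : SimpleGraph W} (hH : H.Connected)
    (i : Fin c) (w w' : W) : (copies c H).Reachable (i, w) (i, w') :=
  SimpleGraph.Reachable.map (copiesIncl c H i) (hH.1 w w')


section decomp
variable {W : Type*} {c : ℕ} {H : SimpleGraph W}

lemma fst_Phi (hH : H.Connected) (w₀ : W) (Φ : copies c H ≃g copies c H)
    (i : Fin c) (w : W) : (Φ (i, w)).1 = (Φ (i, w₀)).1 :=
  copies_reachable_fst ((copies_reachable hH i w w₀).map Φ.toHom)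

lemma Phi_eq (hH : H.Connected) (w₀ : W) (Φ : copies c H ≃g copies c H)
    (i : Fin c) (w : W) : Φ (i, w) = ((Φ (i, w₀)).1, (Φ (i, w)).2) :=
  Prod.ext (fst_Phi hH w₀ Φ i w) rfl

lemma fst_Phi_symm_Phi (hH : H.Connected) (w₀ : W) (Φ : copies c H ≃g copies c H)
    (i : Fin c) (w : W) :
    (Φ.symm ((Φ (i, w₀)).1, w)).1 = i := by
  have h1 : (Φ.symm ((Φ (i, w₀)).1, w)).1 = (Φ.symm ((Φ (i, w₀)).1, (Φ (i, w₀)).2)).1 :=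
    fst_Phi hH (Φ (i, w₀)).2 Φ.symm _ w
  rw [h1]
  simp

noncomputable def psi (hH : H.Connected) (w₀ : W) (Φ : copies c H ≃g copies c H)
    (i : Fin c) : H ≃g H where
  toFun w := (Φ (i, w)).2
  invFun w := (Φ.symm ((Φ (i, w₀)).1, w)).2
  left_inv w := by
    show (Φ.symm ((Φ (i, w₀)).1, (Φ (i, w)).2)).2 = w
    rw [(Phi_eq hH w₀ Φ i w).symm]
    simp
  right_inv w := by
    show (Φ (i, (Φ.symm ((Φ (i, w₀)).1, w)).2)).2 = w
    have h : (i, (Φ.symm ((Φ (i, w₀)).1, w)).2) = Φ.symm ((Φ (i, w₀)).1, w) :=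
      Prod.ext (fst_Phi_symm_Phi hH w₀ Φ i w).symm rfl
    rw [h]
    simp
  map_rel_iff' := by
    intro a b
    constructor
    · intro h
      have h2 : (copies c H).Adj (Φ (i,a)) (Φ (i,b)) → (copies c H).Adj (i,a) (i,b) :=
        Φ.map_rel_iff.mp
      exact (h2 ⟨(fst_Phi hH w₀ Φ i a).trans (fst_Phi hH w₀ Φ i b).symm, h⟩).2
    · intro h
      have h2 : (copies c H).Adj (i,a) (i,b) → (copies c H).Adj (Φ (i,a)) (Φ (i,b)) :=
        Φ.map_rel_iff.mpr
      exact (h2 ⟨rfl, h⟩).2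

lemma psi_apply (hH : H.Connected) (w₀ : W) (Φ : copies c H ≃g copies c H)
    (i : Fin c) (w : W) : psi hH w₀ Φ i w = (Φ (i, w)).2 := rfl

end decomp

def extendAut {W : Type*} {c : ℕ} {H : SimpleGraph W} (i₀ : Fin c) (ψ : H ≃g H) :
    copies c H ≃g copies c H where
  toFun p := (p.1, if p.1 = i₀ then ψ p.2 else p.2)
  invFun p := (p.1, if p.1 = i₀ then ψ.symm p.2 else p.2)
  left_inv p := by obtain ⟨i, w⟩ := p; by_cases h : i = i₀ <;> simp [h]
  right_inv p := by obtain ⟨i, w⟩ := p; by_cases h : i = i₀ <;> simp [h]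
  map_rel_iff' := by
    rintro ⟨ia, wa⟩ ⟨ib, wb⟩
    show (ia = ib ∧ H.Adj _ _) ↔ (ia = ib ∧ H.Adj wa wb)
    apply and_congr_right
    rintro rfl
    by_cases ha : ia = i₀ <;> simp [ha]
    exact ψ.map_rel_iff

lemma extendAut_apply {W : Type*} {c : ℕ} {H : SimpleGraph W} (i₀ : Fin c) (ψ : H ≃g H)
    (w : W) : extendAut i₀ ψ (i₀, w) = (i₀, ψ w) := by simp [extendAut]

theorem stmt14 {V W : Type*} [Fintype V] [Fintype W] (G : SimpleGraph V)
    (H : SimpleGraph W) (d c : ℕ) (hd : 3 ≤ d) (hc : 2 ≤ c)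
    (hH : H.Connected) (hiso : Nonempty (G ≃g copies c H))
    (hcrit : DistCritical G d) :
    numDistLab H (distNum H) < c := by
  obtain ⟨e⟩ := hiso
  -- V is nonempty
  have hV : Nonempty V := by
    by_contra hne
    have h0 : distNum G = 0 :=
      Nat.le_zero.mp (Nat.sInf_le ⟨fun v => (hne ⟨v⟩).elim, fun φ hφ v => (hne ⟨v⟩).elim⟩)
    rw [hcrit.1] at h0
    omega
  obtain ⟨v⟩ := hV
  have w₀ : W := (e v).2
  set k := distNum H with hk
  by_contra hlt
  push_neg at hlt   -- hlt : c ≤ numDistLab H k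
  obtain ⟨i₀, i₁, hne01⟩ : ∃ i₀ i₁ : Fin c, i₁ ≠ i₀ :=
    ⟨⟨0, by omega⟩, ⟨1, by omega⟩, by simp [Fin.ext_iff]⟩
  -- Step 1: d ≤ k, via a distinguishing labeling of `copies c H` built from
  -- c inequivalent distinguishing labelings of H.
  have hdk : d ≤ k := by
    set S := {f : W → Fin k // IsDistinguishing H k f} with hS
    set r := fun f g : S => ∃ φ : H ≃g H, ∀ v, f.1 (φ v) = g.1 v with hr
    haveI : Finite S := Subtype.finite
    haveI : Finite (Quot r) := Quot.finite r
    haveI : Fintype (Quot r) := Fintype.ofFinite _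
    have hcard : Fintype.card (Fin c) ≤ Fintype.card (Quot r) := by
      rw [Fintype.card_fin]
      calc c ≤ numDistLab H k := hlt
        _ = Nat.card (Quot r) := rfl
        _ = Fintype.card (Quot r) := Nat.card_eq_fintype_card
    obtain ⟨g⟩ := Function.Embedding.nonempty_of_card_le hcard
    set rep : Fin c → S := fun i => (g i).out with hrep
    set F : Fin c × W → Fin k := fun p => (rep p.1).1 p.2 with hF
    have hFdist : IsDistinguishing (copies c H) k F := by
      intro Φ hΦ p
      obtain ⟨i, w⟩ := p
      set σi := (Φ (i, w₀)).1 with hσ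
      have hcomm : ∀ u, (rep σi).1 (psi hH w₀ Φ i u) = (rep i).1 u := by
        intro u
        have h1 := hΦ (i, u)
        rw [Phi_eq hH w₀ Φ i u] at h1
        exact h1
      have hrel : r (rep σi) (rep i) := ⟨psi hH w₀ Φ i, hcomm⟩
      have hq : g σi = g i := by
        have := Quot.sound hrel
        rwa [Quot.out_eq, Quot.out_eq] at this
      have hσi : σi = i := g.injective hq
      have hfix : ∀ u, psi hH w₀ Φ i u = u := by
        apply (rep i).2 (psi hH w₀ Φ i)
        intro u
        have h2 := hcomm u
        rwa [hσi] at h2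
      have := hfix w
      rw [psi_apply] at this
      rw [Phi_eq hH w₀ Φ i w, this, ← hσ, hσi]
    have h1 : distNum (copies c H) ≤ k := distNum_le hFdist
    have h2 : distNum G = distNum (copies c H) := distNum_congr e
    rw [← hcrit.1, h2]
    exact h1
  -- Step 2: k ≤ d, by restricting a distinguishing labeling of G to one copy.
  have hkd : k ≤ d := by
    obtain ⟨F₀, hF₀⟩ := distNum_mem G
    have hF₁ : IsDistinguishing (copies c H) (distNum G) (F₀ ∘ e.symm) := isDist_comp e.symm hF₀
    have hf₀dist : IsDistinguishing H (distNum G) (fun w => (F₀ ∘ e.symm) (i₀, w)) := by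
      intro ψ hψ u
      have hpres : ∀ p, (F₀ ∘ e.symm) (extendAut i₀ ψ p) = (F₀ ∘ e.symm) p := by
        rintro ⟨i, w⟩
        by_cases h : i = i₀
        · subst h
          rw [extendAut_apply]
          exact hψ w
        · have : extendAut i₀ ψ (i, w) = (i, w) := by simp [extendAut, h]
          rw [this]
      have h3 := hF₁ (extendAut i₀ ψ) hpres (i₀, u)
      rw [extendAut_apply] at h3
      have := congrArg Prod.snd h3
      exact this
    have := distNum_le hf₀dist
    rwa [hcrit.1] at this
  have hkeq : k = d := le_antisymm hkd hdk
  -- Step 3: contradiction with criticality, using the copy of H as a proper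
  -- induced subgraph.
  set s : Set V := {x | (e x).1 = i₀} with hs_def
  have hmem : ∀ w : W, e.symm (i₀, w) ∈ s := fun w => by simp [hs_def]
  have hs : s ≠ Set.univ := by
    intro h
    have h1 : e.symm (i₁, w₀) ∈ s := h ▸ Set.mem_univ _
    have h2 : (e (e.symm (i₁, w₀))).1 = i₀ := h1
    simp at h2
    exact hne01 h2
  have ι : (G.induce s) ≃g H := {
    toFun := fun a => (e a.1).2
    invFun := fun w => ⟨e.symm (i₀, w), hmem w⟩
    left_inv := fun a => by
      apply Subtype.ext
      have ha : (e a.1).1 = i₀ := a.2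
      show e.symm (i₀, (e a.1).2) = a.1
      rw [← ha]
      simp
    right_inv := fun w => by simp
    map_rel_iff' := by
      intro a b
      show H.Adj (e a.1).2 (e b.1).2 ↔ (G.induce s).Adj a b
      have hadj : (G.induce s).Adj a b ↔ G.Adj a.1 b.1 := Iff.rfl
      rw [hadj, ← e.map_rel_iff]
      show _ ↔ (copies c H).Adj (e a.1) (e b.1)
      constructor
      · intro h
        exact ⟨(show (e a.1).1 = i₀ from a.2).trans (show (e b.1).1 = i₀ from b.2).symm, h⟩
      · exact fun h => h.2 }
  have : distNum (G.induce s) = k := distNum_congr ι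
  exact hcrit.2 s hs (this.trans hkeq)
end

section
/- The only distinguishing critical tree is K₂; that is, no tree T of order n ≥ 3 is d-distinguishing critical for any d. -/
open SimpleGraph



section Aux

variable {V : Type*} {T : SimpleGraph V}

private lemma dist_map_le (hc : T.Connected) (φ : T ≃g T) (x y : V) :
    T.dist (φ x) (φ y) ≤ T.dist x y := by
  obtain ⟨p, hp, hlen⟩ := hc.exists_path_of_dist x y
  calc T.dist (φ x) (φ y) ≤ (p.map φ.toHom).length := SimpleGraph.dist_le _
    _ = p.length := by rw [SimpleGraph.Walk.length_map]
    _ = T.dist x y := hlen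

lemma dist_map' (hc : T.Connected) (φ : T ≃g T) (x y : V) :
    T.dist (φ x) (φ y) = T.dist x y := by
  refine le_antisymm (dist_map_le hc φ x y) ?_
  have h := dist_map_le hc φ.symm (φ x) (φ y)
  simpa using h

lemma dist_ne_of_adj (hT : T.IsTree) {u v : V} (huv : T.Adj u v) (x : V) :
    T.dist x u ≠ T.dist x v := by
  classical
  intro h
  obtain ⟨p, hp, hlen⟩ := hT.isConnected.exists_path_of_dist x u
  by_cases hv : v ∈ p.support
  · have h1 : T.dist x v ≤ (p.takeUntil v hv).length := SimpleGraph.dist_le _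
    have h2 : (p.takeUntil v hv).length + (p.dropUntil v hv).length = p.length := by
      rw [← SimpleGraph.Walk.length_append, p.take_spec hv]
    have h3 : (p.dropUntil v hv).length ≠ 0 := fun h0 =>
      huv.ne' (SimpleGraph.Walk.eq_of_length_eq_zero h0)
    omega
  · obtain ⟨q, hq, hqlen⟩ := hT.isConnected.exists_path_of_dist x v
    have hcat : (p.concat huv).IsPath := by
      rw [← SimpleGraph.Walk.isPath_reverse_iff, SimpleGraph.Walk.reverse_concat,
        SimpleGraph.Walk.cons_isPath_iff]
      refine ⟨(SimpleGraph.Walk.isPath_reverse_iff p).mpr hp, ?_⟩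
      rw [SimpleGraph.Walk.support_reverse]
      simpa using hv
    have heq := hT.IsAcyclic.path_unique ⟨p.concat huv, hcat⟩ ⟨q, hq⟩
    rw [Subtype.mk.injEq] at heq
    have hlen2 : (p.concat huv).length = q.length := by rw [heq]
    rw [SimpleGraph.Walk.length_concat, hlen, hqlen] at hlen2
    omega

lemma parent_unique (hT : T.IsTree) {r x y w : V} (hx : T.Adj x w) (hy : T.Adj y w)
    (hdx : T.dist r x + 1 = T.dist r w) (hdy : T.dist r y + 1 = T.dist r w) : x = y := by
  classical
  obtain ⟨p, hp, hplen⟩ := hT.isConnected.exists_path_of_dist r x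
  obtain ⟨q, hq, hqlen⟩ := hT.isConnected.exists_path_of_dist r y
  have hwp : w ∉ p.support := by
    intro hw
    have h1 : T.dist r w ≤ (p.takeUntil w hw).length := SimpleGraph.dist_le _
    have h2 := p.length_takeUntil_le hw
    omega
  have hwq : w ∉ q.support := by
    intro hw
    have h1 : T.dist r w ≤ (q.takeUntil w hw).length := SimpleGraph.dist_le _
    have h2 := q.length_takeUntil_le hw
    omega
  have hp' : (p.concat hx).IsPath := by
    rw [← SimpleGraph.Walk.isPath_reverse_iff, SimpleGraph.Walk.reverse_concat,
      SimpleGraph.Walk.cons_isPath_iff]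
    refine ⟨(SimpleGraph.Walk.isPath_reverse_iff p).mpr hp, ?_⟩
    rw [SimpleGraph.Walk.support_reverse]
    simpa using hwp
  have hq' : (q.concat hy).IsPath := by
    rw [← SimpleGraph.Walk.isPath_reverse_iff, SimpleGraph.Walk.reverse_concat,
      SimpleGraph.Walk.cons_isPath_iff]
    refine ⟨(SimpleGraph.Walk.isPath_reverse_iff q).mpr hq, ?_⟩
    rw [SimpleGraph.Walk.support_reverse]
    simpa using hwq
  have heq := hT.IsAcyclic.path_unique ⟨p.concat hx, hp'⟩ ⟨q.concat hy, hq'⟩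
  rw [Subtype.mk.injEq] at heq
  have hx1 : (p.concat hx).reverse.support.tail.head? = some x := by
    rw [SimpleGraph.Walk.reverse_concat, SimpleGraph.Walk.support_cons, List.tail_cons,
      SimpleGraph.Walk.support_eq_cons]
    rfl
  have hy1 : (q.concat hy).reverse.support.tail.head? = some y := by
    rw [SimpleGraph.Walk.reverse_concat, SimpleGraph.Walk.support_cons, List.tail_cons,
      SimpleGraph.Walk.support_eq_cons]
    rfl
  rw [heq, hy1] at hx1
  exact (Option.some_inj.mp hx1).symm

lemma exists_leaf [Fintype V] (hT : T.IsTree) (s : Finset V) (hs : s.Nonempty) :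
    ∃ w ∈ s, ∀ x, T.Adj x w → x ∈ s → ∀ y, T.Adj y w → y ∈ s → x = y := by
  classical
  obtain ⟨r, hr⟩ := hs
  obtain ⟨w, hw, hmax⟩ := s.exists_max_image (fun z => T.dist r z) ⟨r, hr⟩
  refine ⟨w, hw, fun x hx hxs y hy hys => ?_⟩
  have key : ∀ z, T.Adj z w → z ∈ s → T.dist r z + 1 = T.dist r w := by
    intro z hz hzs
    have h1 : T.dist r z ≤ T.dist r w := hmax z hzs
    have h2 : T.dist r z ≠ T.dist r w := dist_ne_of_adj hT hz r
    have h3 : T.dist r w ≤ T.dist r z + 1 := by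
      have h4 := hT.isConnected.dist_triangle (u := r) (v := z) (w := w)
      rwa [SimpleGraph.dist_eq_one_iff_adj.mpr hz] at h4
    omega
  exact parent_unique hT hx hy (key x hx hxs) (key y hy hys)

end Aux

section Aux2
variable {V : Type*} {T : SimpleGraph V}

lemma exists_pairing [Fintype V] (hT : T.IsTree) :
    ∀ (n : ℕ) (s : Finset V), s.card ≤ n →
    ∃ (A : Finset V) (g : V → V), A ⊆ s ∧ (∀ a ∈ A, ∀ b ∈ A, ¬T.Adj a b) ∧
      (∀ x ∈ s, x ∉ A → g x ∈ A ∧ T.Adj x (g x) ∧ g (g x) = x) := by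
  classical
  intro n
  induction n with
  | zero =>
    intro s hs
    have : s = ∅ := Finset.card_eq_zero.mp (Nat.le_zero.mp hs)
    subst this
    exact ⟨∅, id, by simp, by simp, by simp⟩
  | succ n ih =>
    intro s hs
    rcases s.eq_empty_or_nonempty with rfl | hne
    · exact ⟨∅, id, by simp, by simp, by simp⟩
    obtain ⟨w, hw, hleaf⟩ := exists_leaf hT s hne
    by_cases hnb : ∃ p ∈ s, T.Adj p w
    · obtain ⟨p, hps, hpw⟩ := hnb
      have hpww : p ≠ w := hpw.ne
      set s' := (s.erase w).erase p with hs'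
      have hcard : s'.card ≤ n := by
        have h1 : (s.erase w).card < s.card := Finset.card_erase_lt_of_mem hw
        have h2 : s'.card ≤ (s.erase w).card := Finset.card_erase_le
        omega
      obtain ⟨A', g', hA's, hind, hcond⟩ := ih s' hcard
      have hA's2 : ∀ a ∈ A', a ∈ s ∧ a ≠ w ∧ a ≠ p := by
        intro a ha
        have := hA's ha
        rw [hs', Finset.mem_erase, Finset.mem_erase] at this
        exact ⟨this.2.2, this.2.1, this.1⟩
      set g : V → V := fun z => if z = w then p else if z = p then w else g' z with hg
      have hgw : g w = p := by simp [hg]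
      have hgp : g p = w := by simp [hg, hpww]
      have hgother : ∀ z, z ≠ w → z ≠ p → g z = g' z := by
        intro z h1 h2; simp [hg, h1, h2]
      refine ⟨insert w A', g, ?_, ?_, ?_⟩
      · intro a ha
        rcases Finset.mem_insert.mp ha with rfl | ha'
        · exact hw
        · exact (hA's2 a ha').1
      · intro a ha b hb hab
        rcases Finset.mem_insert.mp ha with rfl | ha' <;>
          rcases Finset.mem_insert.mp hb with rfl | hb'
        · exact T.irrefl hab
        · have := hleaf b hab.symm (hA's2 b hb').1 p hpw hps
          exact (hA's2 b hb').2.2 this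
        · have := hleaf a hab (hA's2 a ha').1 p hpw hps
          exact (hA's2 a ha').2.2 this
        · exact hind a ha' b hb' hab
      · intro x hxs hxA
        have hxw : x ≠ w := fun h => hxA (h ▸ Finset.mem_insert_self w A')
        by_cases hxp : x = p
        · subst hxp
          refine ⟨hgp ▸ Finset.mem_insert_self w A', ?_, ?_⟩
          · rw [hgp]; exact hpw
          · rw [hgp, hgw]
        · have hxs' : x ∈ s' := by
            rw [hs', Finset.mem_erase, Finset.mem_erase]
            exact ⟨hxp, hxw, hxs⟩
          have hxA' : x ∉ A' := fun h => hxA (Finset.mem_insert_of_mem h)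
          obtain ⟨hg1, hg2, hg3⟩ := hcond x hxs' hxA'
          have he1 : g x = g' x := hgother x hxw hxp
          have hgx := hA's2 _ hg1
          refine ⟨?_, ?_, ?_⟩
          · rw [he1]; exact Finset.mem_insert_of_mem hg1
          · rw [he1]; exact hg2
          · rw [he1, hgother _ hgx.2.1 hgx.2.2, hg3]
    · push_neg at hnb
      set s' := s.erase w with hs'
      have hcard : s'.card ≤ n := by
        have h1 : s'.card < s.card := by rw [hs']; exact Finset.card_erase_lt_of_mem hw
        omega
      obtain ⟨A', g', hA's, hind, hcond⟩ := ih s' hcard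
      have hA's2 : ∀ a ∈ A', a ∈ s ∧ a ≠ w := by
        intro a ha
        have := hA's ha
        rw [hs', Finset.mem_erase] at this
        exact ⟨this.2, this.1⟩
      refine ⟨insert w A', g', ?_, ?_, ?_⟩
      · intro a ha
        rcases Finset.mem_insert.mp ha with rfl | ha'
        · exact hw
        · exact (hA's2 a ha').1
      · intro a ha b hb hab
        rcases Finset.mem_insert.mp ha with rfl | ha' <;>
          rcases Finset.mem_insert.mp hb with rfl | hb'
        · exact T.irrefl hab
        · exact hnb b (hA's2 b hb').1 hab.symm
        · exact hnb a (hA's2 a ha').1 hab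
        · exact hind a ha' b hb' hab
      · intro x hxs hxA
        have hxw : x ≠ w := fun h => hxA (h ▸ Finset.mem_insert_self w A')
        have hxs' : x ∈ s' := by rw [hs', Finset.mem_erase]; exact ⟨hxw, hxs⟩
        have hxA' : x ∉ A' := fun h => hxA (Finset.mem_insert_of_mem h)
        obtain ⟨hg1, hg2, hg3⟩ := hcond x hxs' hxA'
        exact ⟨Finset.mem_insert_of_mem hg1, hg2, hg3⟩

lemma exists_nbr {u v : V} :
    ∀ {x z : V} (_ : T.Walk x z), (x = u ∨ x = v) → z ≠ u → z ≠ v →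
      ∃ w, w ≠ u ∧ w ≠ v ∧ (T.Adj u w ∨ T.Adj v w) := by
  intro x z p
  induction p with
  | nil =>
    intro hx hz1 hz2
    rcases hx with rfl | rfl
    · exact absurd rfl hz1
    · exact absurd rfl hz2
  | @cons a b c h q ih =>
    intro hx hz1 hz2
    by_cases hb1 : b = u
    · exact ih (Or.inl hb1) hz1 hz2
    by_cases hb2 : b = v
    · exact ih (Or.inr hb2) hz1 hz2
    refine ⟨b, hb1, hb2, ?_⟩
    rcases hx with rfl | rfl
    · exact Or.inl h
    · exact Or.inr h

lemma no_swap (hT : T.IsTree) {φ : T ≃g T} {u v w : V}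
    (huv : T.Adj u v) (hφu : φ u = v) (hφv : φ v = u)
    (hw1 : w ≠ u) (hw2 : w ≠ v) (hadj : T.Adj u w)
    (hwmoved : φ w ≠ w) (hwadj : T.Adj w (φ w)) (hwinv : φ (φ w) = w) : False := by
  have hdw : T.dist (φ w) v = 1 := by
    have h := dist_map' hT.isConnected φ w u
    rw [hφu, SimpleGraph.dist_eq_one_iff_adj.mpr hadj.symm] at h
    exact h
  have hadj2 : T.Adj (φ w) v := SimpleGraph.dist_eq_one_iff_adj.mp hdw
  have hne1 : φ w ≠ u := by
    intro h
    apply hw2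
    rw [← hwinv, h, hφu]
  have hne2 : φ w ≠ v := by
    intro h
    apply hw1
    rw [← hwinv, h, hφv]
  have hp1 : (SimpleGraph.Walk.cons hadj.symm
      (SimpleGraph.Walk.cons huv SimpleGraph.Walk.nil) : T.Walk w v).IsPath := by
    simp [SimpleGraph.Walk.cons_isPath_iff, hw1, hw2, huv.ne]
  have hp2 : (SimpleGraph.Walk.cons hwadj
      (SimpleGraph.Walk.cons hadj2 SimpleGraph.Walk.nil) : T.Walk w v).IsPath := by
    have hvw : w ≠ φ w := Ne.symm hwmoved
    simp [SimpleGraph.Walk.cons_isPath_iff, hvw, hw2, hne2]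
  have heq := hT.IsAcyclic.path_unique
    ⟨SimpleGraph.Walk.cons hadj.symm (SimpleGraph.Walk.cons huv SimpleGraph.Walk.nil), hp1⟩
    ⟨SimpleGraph.Walk.cons hwadj (SimpleGraph.Walk.cons hadj2 SimpleGraph.Walk.nil), hp2⟩
  rw [Subtype.mk.injEq] at heq
  have hsup := congrArg SimpleGraph.Walk.support heq
  simp only [SimpleGraph.Walk.support_cons, SimpleGraph.Walk.support_nil] at hsup
  simp only [List.cons.injEq, and_true, true_and] at hsup
  exact hne1 hsup.symm

end Aux2

section Aux3
variable {V : Type*} {T : SimpleGraph V}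

lemma distNum_le_card [Fintype V] (hT : T.IsTree) (h3 : 3 ≤ Fintype.card V)
    (A : Finset V) (g : V → V)
    (hind : ∀ a ∈ A, ∀ b ∈ A, ¬T.Adj a b)
    (hpair : ∀ x, x ∉ A → g x ∈ A ∧ T.Adj x (g x) ∧ g (g x) = x) :
    distNum T ≤ A.card := by
  classical
  set cl : V → {a // a ∈ A} :=
    fun v => if h : v ∈ A then ⟨v, h⟩ else ⟨g v, (hpair v h).1⟩ with hcl
  have clA : ∀ v (h : v ∈ A), cl v = ⟨v, h⟩ := fun v h => dif_pos h
  have clB : ∀ v (h : v ∉ A), cl v = ⟨g v, (hpair v h).1⟩ := fun v h => dif_neg h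
  have hdis : IsDistinguishing T A.card (fun v => A.equivFin (cl v)) := by
    intro φ hφ
    have hclφ : ∀ v, cl (φ v) = cl v := fun v => A.equivFin.injective (hφ v)
    have caseAA : ∀ v, v ∈ A → φ v ∈ A → φ v = v := by
      intro v h1 h2
      have h := hclφ v
      rw [clA _ h2, clA _ h1, Subtype.mk.injEq] at h
      exact h
    have caseAB : ∀ v, v ∈ A → φ v ∉ A → g (φ v) = v := by
      intro v h1 h2
      have h := hclφ v
      rw [clB _ h2, clA _ h1, Subtype.mk.injEq] at h
      exact h
    have caseBA : ∀ v, v ∉ A → φ v ∈ A → φ v = g v := by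
      intro v h1 h2
      have h := hclφ v
      rw [clA _ h2, clB _ h1, Subtype.mk.injEq] at h
      exact h
    have caseBB : ∀ v, v ∉ A → φ v ∉ A → φ v = v := by
      intro v h1 h2
      have h := hclφ v
      rw [clB _ h2, clB _ h1, Subtype.mk.injEq] at h
      have := congrArg g h
      rwa [(hpair _ h2).2.2, (hpair _ h1).2.2] at this
    have hinj : Function.Injective φ := φ.toEquiv.injective
    have key2 : ∀ v, φ v = v ∨ (φ (φ v) = v ∧ T.Adj v (φ v)) := by
      intro v
      by_cases h1 : v ∈ A <;> by_cases h2 : φ v ∈ A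
      · exact Or.inl (caseAA v h1 h2)
      · refine Or.inr ⟨?_, ?_⟩
        · by_cases h3' : φ (φ v) ∈ A
          · rw [caseBA (φ v) h2 h3', caseAB v h1 h2]
          · have hfix := hinj (caseBB (φ v) h2 h3')
            exact absurd (by rwa [hfix] : φ v ∈ A) h2
        · have := (hpair (φ v) h2).2.1
          rw [caseAB v h1 h2] at this
          exact this.symm
      · refine Or.inr ⟨?_, ?_⟩
        · by_cases h3' : φ (φ v) ∈ A
          · have hfix := hinj (caseAA (φ v) h2 h3')
            exact absurd (by rwa [hfix] at h2 : v ∈ A) h1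
          · have h' : g (φ (φ v)) = g v := (caseAB (φ v) h2 h3').trans (caseBA v h1 h2)
            have := congrArg g h'
            rwa [(hpair _ h3').2.2, (hpair _ h1).2.2] at this
        · have := (hpair v h1).2.1
          rw [← caseBA v h1 h2] at this
          exact this
      · exact Or.inl (caseBB v h1 h2)
    intro u
    by_contra hu
    obtain ⟨hinv, hadj⟩ := (key2 u).resolve_left hu
    by_cases hfix : ∃ x, φ x = x
    · obtain ⟨x, hx⟩ := hfix
      have h := dist_map' hT.isConnected φ x u
      rw [hx] at h
      exact dist_ne_of_adj hT hadj x h.symm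
    · push_neg at hfix
      have hall : ∀ z, φ (φ z) = z ∧ T.Adj z (φ z) :=
        fun z => (key2 z).resolve_left (hfix z)
      have hthird : ∃ z, z ≠ u ∧ z ≠ (φ u) := by
        by_contra hcon
        push_neg at hcon
        have hsub : (Finset.univ : Finset V) ⊆ {u, φ u} := by
          intro z _
          rcases eq_or_ne z u with rfl | hz1
          · simp
          · simp [hcon z hz1]
        have h1 := Finset.card_le_card hsub
        have h2 : ({u, φ u} : Finset V).card ≤ 2 := by
          apply le_trans (Finset.card_insert_le _ _)
          simp
        rw [Finset.card_univ] at h1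
        omega
      obtain ⟨z, hz1, hz2⟩ := hthird
      obtain ⟨p⟩ := hT.isConnected.preconnected u z
      obtain ⟨w, hwu, hwv, hwadj⟩ := exists_nbr (v := φ u) p (Or.inl rfl) hz1 hz2
      rcases hwadj with h | h
      · exact no_swap hT hadj rfl hinv hwu hwv h (hfix w) (hall w).2 (hall w).1
      · exact no_swap hT hadj.symm hinv rfl hwv hwu h (hfix w) (hall w).2 (hall w).1
  exact Nat.sInf_le ⟨_, hdis⟩

end Aux3

section Aux4
variable {V : Type*} {T : SimpleGraph V}

lemma distNum_induce_indep [Fintype V] (B : Finset V)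
    (hind : ∀ a ∈ B, ∀ b ∈ B, ¬T.Adj a b) :
    distNum (T.induce (↑B : Set V)) = B.card := by
  classical
  have e : ↥(↑B : Set V) ≃ Fin B.card :=
    (Equiv.subtypeEquivRight (fun x => Finset.mem_coe)).trans B.equivFin
  have hAdjF : ∀ a b : ↥(↑B : Set V), ¬ (T.induce (↑B : Set V)).Adj a b := by
    rintro ⟨a, ha⟩ ⟨b, hb⟩ h
    exact hind a (Finset.mem_coe.mp ha) b (Finset.mem_coe.mp hb) h
  have hmem : ∃ f : ↥(↑B : Set V) → Fin B.card,
      IsDistinguishing (T.induce (↑B : Set V)) B.card f :=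
    ⟨e, fun φ hφ v => e.injective (hφ v)⟩
  apply le_antisymm
  · exact Nat.sInf_le hmem
  · apply le_csInf ⟨B.card, hmem⟩
    rintro r ⟨f, hf⟩
    by_contra hlt
    push_neg at hlt
    obtain ⟨i, j, hij, hfe⟩ := Fintype.exists_ne_map_eq_of_card_lt
      (fun i : Fin B.card => f (e.symm i)) (by simpa using hlt)
    have hxy : e.symm i ≠ e.symm j := fun h => hij (e.symm.injective h)
    let φ : T.induce (↑B : Set V) ≃g T.induce (↑B : Set V) :=
      ⟨Equiv.swap (e.symm i) (e.symm j),
        fun {a b} => iff_of_false (hAdjF _ _) (hAdjF _ _)⟩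
    have hpres : ∀ z, f (φ z) = f z := by
      intro z
      have hz : φ z = Equiv.swap (e.symm i) (e.symm j) z := rfl
      rw [hz]
      rcases eq_or_ne z (e.symm i) with rfl | hzx
      · rw [Equiv.swap_apply_left]
        exact hfe.symm
      rcases eq_or_ne z (e.symm j) with rfl | hzy
      · rw [Equiv.swap_apply_right]
        exact hfe
      · rw [Equiv.swap_apply_of_ne_of_ne hzx hzy]
    have hx := hf φ hpres (e.symm i)
    have : Equiv.swap (e.symm i) (e.symm j) (e.symm i) = e.symm i := hx
    rw [Equiv.swap_apply_left] at this
    exact hxy this.symm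

lemma exists_edge (hc : T.Connected) {x y : V} (hxy : x ≠ y) : ∃ a b, T.Adj a b := by
  obtain ⟨p⟩ := hc.preconnected x y
  cases p with
  | nil => exact absurd rfl hxy
  | cons h _ => exact ⟨_, _, h⟩

end Aux4

theorem stmt19 {V : Type*} [Fintype V] (T : SimpleGraph V)
    (hT : T.IsTree) (h3 : 3 ≤ Fintype.card V) :
    ∀ d, ¬ DistCritical T d := by
  classical
  rintro d ⟨hd, hcrit⟩
  have hVne : Nonempty V := Fintype.card_pos_iff.mp (by omega)
  have hSne : {r : ℕ | ∃ f : V → Fin r, IsDistinguishing T r f}.Nonempty :=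
    ⟨Fintype.card V, Fintype.equivFin V, fun φ hφ v => (Fintype.equivFin V).injective (hφ v)⟩
  have hdmem : ∃ f : V → Fin d, IsDistinguishing T d f := hd ▸ Nat.sInf_mem hSne
  have hd1 : 1 ≤ d := by
    by_contra hcon
    obtain ⟨f, -⟩ := hdmem
    obtain ⟨v⟩ := hVne
    have : d = 0 := by omega
    subst this
    exact (f v).elim0
  obtain ⟨A, g, -, hind, hpair⟩ := exists_pairing hT (Fintype.card V) Finset.univ
    (by rw [Finset.card_univ])
  have hpair' : ∀ x, x ∉ A → g x ∈ A ∧ T.Adj x (g x) ∧ g (g x) = x :=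
    fun x hx => hpair x (Finset.mem_univ x) hx
  have hle : d ≤ A.card := hd ▸ distNum_le_card hT h3 A g hind hpair'
  obtain ⟨B, hBA, hBcard⟩ := Finset.exists_subset_card_eq hle
  have hBind : ∀ a ∈ B, ∀ b ∈ B, ¬T.Adj a b :=
    fun a ha b hb => hind a (hBA ha) b (hBA hb)
  have hne_univ : (↑B : Set V) ≠ Set.univ := by
    intro hu
    obtain ⟨x, y, hxy⟩ := Fintype.exists_pair_of_one_lt_card (α := V) (by omega)
    obtain ⟨a, b, hab⟩ := exists_edge hT.isConnected hxy
    have ha : a ∈ B := Finset.mem_coe.mp (hu ▸ Set.mem_univ a)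
    have hb : b ∈ B := Finset.mem_coe.mp (hu ▸ Set.mem_univ b)
    exact hBind a ha b hb hab
  exact hcrit ↑B hne_univ (by rw [distNum_induce_indep B hBind, hBcard])
end
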